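/- Compact set lemma: let t be a positive integer and A a (2t+2)-compact set, i.e., a finite set of integers containing -1, -2, ..., -(2t+1), whose every other element a satisfies a ≥ 1 and a ≢ 0 mod (2t+2), and which is closed downwards within positive congruence classes mod (2t+2) (if b ∈ A, b > a ≥ 1, b ≡ a mod 2t+2, then a ∈ A). Let max_{2t+2}(A) be the set of elements of A maximal in their congruence class mod (2t+2). Then ∏_{a ∈ max_{2t+2}(A)} (a + 2t + 2)/a = - ∏_{a ∈ A, a > 0} (1 - ((2t+2)/a)²). -/

import Mathlib

open scoped Classical

/-- An integer partition, given by its (0-indexed) sequence of parts. -/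
structure FPartition where
  parts : ℕ → ℕ
  antitone : Antitone parts
  finite_support : (Function.support parts).Finite

namespace FPartition

/-- The weight `|λ|` of a partition: the sum of its parts. -/
noncomputable def weight (p : FPartition) : ℕ := p.finite_support.toFinset.sum p.parts

/-- The conjugate partition, as a function: `conj j` is the number of parts `> j`. -/
noncomputable def conj (p : FPartition) (j : ℕ) : ℕ := {i | j < p.parts i}.ncard

/-- The cells (boxes) of the Ferrers diagram, 0-indexed. -/
def cells (p : FPartition) : Set (ℕ × ℕ) := {c | c.2 < p.parts c.1}

lemma cells_finite (p : FPartition) : p.cells.Finite := by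
  have hsub : p.cells ⊆ (Function.support p.parts) ×ˢ (Set.Iio (p.parts 0)) := by
    rintro ⟨i, j⟩ h
    have hj : j < p.parts i := h
    constructor
    · simp only [Function.mem_support]
      omega
    · exact lt_of_lt_of_le hj (p.antitone (Nat.zero_le i))
  exact (p.finite_support.prod (Set.finite_Iio _)).subset hsub

/-- The cells of the Ferrers diagram as a finset. -/
noncomputable def cellsFinset (p : FPartition) : Finset (ℕ × ℕ) := p.cells_finite.toFinset

/-- Hook length of the (0-indexed) box `(i,j)`:  `λ_i - j + λ*_j - i - 1` (1-indexed formula). -/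
noncomputable def hook (p : FPartition) (i j : ℕ) : ℕ := p.parts i + p.conj j - i - j - 1

/-- The multiset of hook lengths of all boxes of `p`. -/
noncomputable def hooks (p : FPartition) : Multiset ℕ :=
  p.cellsFinset.val.map fun c => p.hook c.1 c.2

/-- The Durfee length: the side of the largest square contained in the diagram. -/
noncomputable def durfee (p : FPartition) : ℕ := {i | i < p.parts i}.ncard

/-- The sign `δ_λ = (-1)^{D(λ)}`. -/
noncomputable def delta (p : FPartition) : ℤ := (-1) ^ p.durfee

/-- Self-conjugate partitions: `λ = λ*`. -/
noncomputable def IsSelfConjugate (p : FPartition) : Prop := ∀ j, p.conj j = p.parts j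

/-- Doubled distinct partitions: `λ_i = λ*_i + 1` for `i` in the Durfee square. -/
noncomputable def IsDoubledDistinct (p : FPartition) : Prop :=
  ∀ i < p.durfee, p.parts i = p.conj i + 1

/-- `t`-cores: partitions with no hook length divisible by `t`. -/
noncomputable def IsCore (t : ℕ) (p : FPartition) : Prop := ∀ h ∈ p.hooks, ¬ t ∣ h

/-- The multiset of signed hook lengths `ε_h · h`, where `ε_h = -1` for boxes strictly
above the diagonal and `1` otherwise. -/
noncomputable def signedHooks (p : FPartition) : Multiset ℤ :=
  p.cellsFinset.val.map fun c => (if c.1 < c.2 then -1 else 1) * (p.hook c.1 c.2 : ℤ)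

/-- The multiset of signed hook lengths `ε_h · h` over boxes whose hook length is a
multiple of `t`. -/
noncomputable def signedHooksT (t : ℕ) (p : FPartition) : Multiset ℤ :=
  (p.cellsFinset.filter fun c => t ∣ p.hook c.1 c.2).val.map
    fun c => (if c.1 < c.2 then -1 else 1) * (p.hook c.1 c.2 : ℤ)

/-- The multiset of principal hook lengths (hooks of diagonal boxes). -/
noncomputable def principalHooks (p : FPartition) : Multiset ℕ :=
  (Finset.range p.durfee).val.map fun i => p.hook i i

lemma conj_set_finite (p : FPartition) (j : ℕ) : {i | j < p.parts i}.Finite := by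
  apply p.finite_support.subset
  intro i hi
  simp only [Set.mem_setOf_eq] at hi
  simp only [Function.mem_support]
  omega

/-- The conjugate partition, as a `Partition`. -/
noncomputable def conjugate (p : FPartition) : FPartition where
  parts := p.conj
  antitone := fun a b hab =>
    Set.ncard_le_ncard (fun i hi => lt_of_le_of_lt hab hi) (p.conj_set_finite a)
  finite_support := by
    apply (Set.finite_Iio (p.parts 0)).subset
    intro j hj
    obtain ⟨i, hi⟩ := Set.nonempty_of_ncard_ne_zero hj
    exact lt_of_lt_of_le hi (p.antitone (Nat.zero_le i))

end FPartition

/-- "Infinite" product `∏_{k ≥ 1} f k` of power series, defined coefficientwise;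
this is the honest infinite product whenever `f k ≡ 1 mod X^k`. -/
noncomputable def Pinf {R : Type*} [CommRing R] (f : ℕ → PowerSeries R) : PowerSeries R :=
  PowerSeries.mk fun n => PowerSeries.coeff n (∏ k ∈ Finset.range (n + 1), f (k + 1))

/-- The Euler-type product `E R m = ∏_{k ≥ 1} (1 - x^{m k}) = (q^m; q^m)_∞`. -/
noncomputable def E (R : Type*) [CommRing R] (m : ℕ) : PowerSeries R :=
  Pinf fun k => 1 - PowerSeries.X ^ (m * k)

/-- The binomial series `(1 - x^m)^a` for an exponent `a` in a binomial ring. -/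
noncomputable def binomSeries {R : Type*} [CommRing R] [BinomialRing R] (a : R) (m : ℕ) :
    PowerSeries R :=
  PowerSeries.mk fun n => if m ∣ n then (-1) ^ (n / m) * Ring.choose a (n / m) else 0

/-- `m` is the position of a vertical step (a `0`) in the canonical bi-infinite binary
word of the partition `p`. -/
def zeroPos (p : FPartition) (m : ℤ) : Prop := ∃ i : ℕ, (p.parts i : ℤ) - i - 1 = m

/-- The Littlewood decomposition, as a relation: `core` and `quot` are the `t`-core and
`t`-quotient of `lam`, expressed via the binary-word encoding: the `k`-th subsequence of
the word of `lam` is the word of `quot k` (up to the shift `s k`), and the `k`-th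
subsequence of the word of `core` is the corresponding flushed word `...000111...` with
the same charge. -/
def IsLittlewood (t : ℕ) (lam core : FPartition) (quot : ℕ → FPartition) : Prop :=
  ∃ s : ℕ → ℤ,
    (∀ k < t, ∀ j : ℤ, zeroPos (quot k) j ↔ zeroPos lam (t * (j + s k) + k)) ∧
    (∀ k < t, ∀ j : ℤ, zeroPos core (t * (j + s k) + k) ↔ j < 0)

private lemma csl_ratio (B M : ℚ) (hB : B ≠ 0) (hBM : B - M ≠ 0) :
    ((B + M) / B) / (((B - M) + M) / (B - M)) = 1 - (M / B) ^ 2 := by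
  rw [sub_add_cancel]
  field_simp
  ring

private lemma csl_aux (t : ℕ) (ht : 0 < t) : ∀ n : ℕ, ∀ A : Finset ℤ,
    (∀ j : ℤ, 1 ≤ j → j ≤ 2 * t + 1 → -j ∈ A) →
    (∀ a ∈ A, ¬(-(2 * (t : ℤ) + 1) ≤ a ∧ a ≤ -1) →
      1 ≤ a ∧ ¬ ((2 * (t : ℤ) + 2) ∣ a)) →
    (∀ a b : ℤ, b ∈ A → 1 ≤ a → a < b → a ≡ b [ZMOD (2 * t + 2)] → a ∈ A) →
    (A.filter (fun a => 0 < a)).card = n →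
    ∏ a ∈ A.filter (fun a => ∀ b ∈ A, a < b → ¬ a ≡ b [ZMOD (2 * t + 2)]),
        (((a : ℚ) + 2 * t + 2) / a) =
      - ∏ a ∈ A.filter (fun a => 0 < a), (1 - ((2 * (t : ℚ) + 2) / a) ^ 2) := by
  intro n
  induction n with
  | zero =>
    intro A h1 h2 h3 hcard
    have hfilt : A.filter (fun a => 0 < a) = ∅ := Finset.card_eq_zero.mp hcard
    have hnopos : ∀ a ∈ A, a ≤ 0 := by
      intro a ha
      by_contra h
      have : a ∈ A.filter (fun a => 0 < a) := Finset.mem_filter.mpr ⟨ha, by omega⟩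
      simp [hfilt] at this
    have hAeq : A = (Finset.Icc (1:ℤ) (2*t+1)).image (fun j => -j) := by
      ext a
      simp only [Finset.mem_image, Finset.mem_Icc]
      constructor
      · intro ha
        refine ⟨-a, ?_, by ring⟩
        by_cases hw : -(2 * (t : ℤ) + 1) ≤ a ∧ a ≤ -1
        · omega
        · have := h2 a ha hw
          have := hnopos a ha
          omega
      · rintro ⟨j, ⟨hj1, hj2⟩, rfl⟩
        exact h1 j hj1 (by exact_mod_cast hj2)
    have hwin : ∀ a ∈ A, -(2*(t:ℤ)+1) ≤ a ∧ a ≤ -1 := by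
      intro a ha
      rw [hAeq] at ha
      simp only [Finset.mem_image, Finset.mem_Icc] at ha
      obtain ⟨j, ⟨hj1, hj2⟩, rfl⟩ := ha
      constructor <;> [skip; omega]
      push_cast
      omega
    have hmax : A.filter (fun a => ∀ b ∈ A, a < b → ¬ a ≡ b [ZMOD (2 * t + 2)]) = A := by
      apply Finset.filter_true_of_mem
      intro a ha b hb hab hcg
      have hd : (2*(t:ℤ)+2) ∣ b - a := Int.ModEq.dvd hcg
      have ha' := hwin a ha
      have hb' := hwin b hb
      have hle := Int.le_of_dvd (by omega) hd
      omega
    rw [hmax, hfilt, hAeq]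
    rw [Finset.prod_image (fun x _ y _ h => by omega)]
    simp only [Finset.prod_empty, mul_one]
    have hnum : ∏ j ∈ Finset.Icc (1:ℤ) (2*t+1), (((-j : ℤ) : ℚ) + 2*t+2)
        = ∏ j ∈ Finset.Icc (1:ℤ) (2*t+1), (j : ℚ) := by
      refine Finset.prod_nbij' (fun j => 2*t+2-j) (fun j => 2*t+2-j) ?_ ?_ ?_ ?_ ?_
      · intro a ha; simp only [Finset.mem_Icc] at *; omega
      · intro a ha; simp only [Finset.mem_Icc] at *; omega
      · intro a _; omega
      · intro a _; omega
      · intro a _; push_cast; ring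
    have hden : ∏ j ∈ Finset.Icc (1:ℤ) (2*t+1), (((-j : ℤ) : ℚ))
        = - ∏ j ∈ Finset.Icc (1:ℤ) (2*t+1), (j : ℚ) := by
      have : ∀ j ∈ Finset.Icc (1:ℤ) (2*t+1), ((-j : ℤ) : ℚ) = (-1) * (j : ℚ) := by
        intro j _; push_cast; ring
      rw [Finset.prod_congr rfl this, Finset.prod_mul_distrib, Finset.prod_const]
      have hc : (Finset.Icc (1:ℤ) (2*t+1)).card = 2*t+1 := by
        rw [Int.card_Icc]; omega
      rw [hc]
      have : ((-1 : ℚ)) ^ (2*t+1) = -1 := Odd.neg_one_pow ⟨t, by ring⟩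
      rw [this]; ring
    have hprodne : (∏ j ∈ Finset.Icc (1:ℤ) (2*t+1), (j : ℚ)) ≠ 0 := by
      apply Finset.prod_ne_zero_iff.mpr
      intro j hj
      simp only [Finset.mem_Icc] at hj
      exact_mod_cast (by omega : j ≠ 0)
    calc ∏ j ∈ Finset.Icc (1:ℤ) (2*t+1), (((-j : ℤ) : ℚ) + 2*t+2) / ((-j : ℤ) : ℚ)
        = (∏ j ∈ Finset.Icc (1:ℤ) (2*t+1), (((-j : ℤ) : ℚ) + 2*t+2)) /
          (∏ j ∈ Finset.Icc (1:ℤ) (2*t+1), ((-j : ℤ) : ℚ)) := Finset.prod_div_distrib _ _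
      _ = -1 := by rw [hnum, hden]; field_simp
  | succ n ih =>
    intro A h1 h2 h3 hcard
    have hne : (A.filter (fun a => 0 < a)).Nonempty := Finset.card_pos.mp (by omega)
    set b := (A.filter (fun a => 0 < a)).max' hne with hbdef
    have hbmem := (A.filter (fun a => 0 < a)).max'_mem hne
    have hbA : b ∈ A := (Finset.mem_filter.mp hbmem).1
    have hbpos : 0 < b := (Finset.mem_filter.mp hbmem).2
    have hbmax : ∀ c ∈ A, 0 < c → c ≤ b := fun c hc hcp =>
      Finset.le_max' _ c (Finset.mem_filter.mpr ⟨hc, hcp⟩)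
    have hbnd : ¬ (2 * (t : ℤ) + 2) ∣ b := (h2 b hbA (by omega)).2
    set m : ℤ := 2 * t + 2 with hmdef
    have hmpos : 0 < m := by omega
    have hbm_ne : b - m ≠ b := by omega
    have hbne_m : b ≠ m := fun h => hbnd (h ▸ dvd_refl m)
    have hcong_bm : b - m ≡ b [ZMOD (2 * t + 2)] := Int.modEq_iff_dvd.mpr ⟨1, by omega⟩
    have hbmA : b - m ∈ A := by
      by_cases hb1 : 1 ≤ b - m
      · exact h3 (b - m) b hbA hb1 (by omega) hcong_bm
      · have : -(b - m) = m - b := by ring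
        have h := h1 (m - b) (by omega) (by omega)
        have : -(m - b) = b - m := by ring
        rwa [this] at h
    set A' := A.erase b with hA'def
    have hA'sub : A' ⊆ A := Finset.erase_subset _ _
    have h1' : ∀ j : ℤ, 1 ≤ j → j ≤ 2 * t + 1 → -j ∈ A' := by
      intro j hj1 hj2
      exact Finset.mem_erase.mpr ⟨by omega, h1 j hj1 hj2⟩
    have h2' : ∀ a ∈ A', ¬(-(2 * (t : ℤ) + 1) ≤ a ∧ a ≤ -1) →
        1 ≤ a ∧ ¬ ((2 * (t : ℤ) + 2) ∣ a) := fun a ha => h2 a (hA'sub ha)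
    have h3' : ∀ a c : ℤ, c ∈ A' → 1 ≤ a → a < c → a ≡ c [ZMOD (2 * t + 2)] → a ∈ A' := by
      intro a c hc ha1 hac hcg
      have hcA : c ∈ A := hA'sub hc
      have haA : a ∈ A := h3 a c hcA ha1 hac hcg
      refine Finset.mem_erase.mpr ⟨?_, haA⟩
      rintro rfl
      have hcpos : 0 < c := by omega
      have := hbmax c hcA hcpos
      omega
    have hP' : A'.filter (fun a => 0 < a) = (A.filter (fun a => 0 < a)).erase b := by
      rw [hA'def, Finset.filter_erase]
    have hcard' : (A'.filter (fun a => 0 < a)).card = n := by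
      rw [hP', Finset.card_erase_of_mem hbmem]; omega
    have key := ih A' h1' h2' h3' hcard'
    -- arithmetic facts
    have hle_cong : ∀ c ∈ A, c ≡ b [ZMOD (2 * t + 2)] → c ≤ b := by
      intro c hc _
      by_cases hcp : 0 < c
      · exact hbmax c hc hcp
      · omega
    have nogap : ∀ c : ℤ, b - m < c → c < b → ¬ (c ≡ b [ZMOD (2 * t + 2)]) := by
      intro c hc1 hc2 hcg
      have hd : (2*(t:ℤ)+2) ∣ b - c := Int.ModEq.dvd hcg
      have := Int.le_of_dvd (by omega) hd
      omega
    -- the max-filter identity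
    have hMset : A.filter (fun a => ∀ c ∈ A, a < c → ¬ a ≡ c [ZMOD (2 * t + 2)]) =
        insert b ((A'.filter (fun a => ∀ c ∈ A', a < c → ¬ a ≡ c [ZMOD (2 * t + 2)])).erase (b - m)) := by
      ext a
      simp only [Finset.mem_insert, Finset.mem_erase, Finset.mem_filter, hA'def,
        Finset.mem_erase]
      constructor
      · intro ⟨haA, hmaxa⟩
        by_cases hab : a = b
        · left; exact hab
        · right
          have haneq : a ≠ b - m := by
            rintro rfl
            exact hmaxa b hbA (by omega) hcong_bm
          refine ⟨haneq, ⟨hab, haA⟩, ?_⟩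
          intro c hc hac
          exact hmaxa c hc.2 hac
      · rintro (rfl | ⟨hanm, ⟨hab, haA⟩, hmaxa⟩)
        · refine ⟨hbA, ?_⟩
          intro c hc hbc hcg
          have := hle_cong c hc (Int.ModEq.symm hcg)
          omega
        · refine ⟨haA, ?_⟩
          intro c hc hac hcg
          by_cases hcb : c = b
          · subst hcb
            rcases lt_trichotomy a (b - m) with h | h | h
            · exact hmaxa (b - m) ⟨by omega, hbmA⟩ h (hcg.trans hcong_bm.symm)
            · exact hanm h
            · exact nogap a h hac hcg
          · exact hmaxa c ⟨hcb, hc⟩ hac hcg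
    -- b - m is in the max-filter of A'
    have hbmM : b - m ∈ A'.filter (fun a => ∀ c ∈ A', a < c → ¬ a ≡ c [ZMOD (2 * t + 2)]) := by
      refine Finset.mem_filter.mpr ⟨Finset.mem_erase.mpr ⟨by omega, hbmA⟩, ?_⟩
      intro c hc hlt hcg
      have hcA : c ∈ A := hA'sub hc
      have hcb : c ≠ b := (Finset.mem_erase.mp hc).1
      have hcgb : c ≡ b [ZMOD (2 * t + 2)] := (Int.ModEq.symm hcg).trans hcong_bm
      have := hle_cong c hcA hcgb
      exact nogap c hlt (by omega) hcgb
    have hbnotin : b ∉ (A'.filter (fun a => ∀ c ∈ A', a < c → ¬ a ≡ c [ZMOD (2 * t + 2)])).erase (b - m) := by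
      intro h
      have := (Finset.mem_filter.mp (Finset.mem_erase.mp h).2).1
      exact (Finset.mem_erase.mp this).1 rfl
    -- now the product computation
    set f : ℤ → ℚ := fun a => ((a : ℚ) + 2 * t + 2) / a with hfdef
    set g : ℤ → ℚ := fun a => 1 - ((2 * (t : ℚ) + 2) / a) ^ 2 with hgdef
    have hbQ : (b : ℚ) ≠ 0 := Int.cast_ne_zero.mpr (by omega)
    have hb2 : (b : ℚ) - (2 * (t : ℚ) + 2) ≠ 0 := by
      have h : ((b - (2 * (t : ℤ) + 2) : ℤ) : ℚ) ≠ 0 := Int.cast_ne_zero.mpr (by omega)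
      push_cast at h
      intro hh
      exact h (by linarith)
    have hcast : ((b - m : ℤ) : ℚ) = (b : ℚ) - (2 * (t : ℚ) + 2) := by
      rw [hmdef]; push_cast; ring
    have hfbm_ne : f (b - m) ≠ 0 := by
      rw [hfdef]
      simp only
      rw [hcast]
      have hnum : (b : ℚ) - (2 * (t : ℚ) + 2) + 2 * t + 2 = (b : ℚ) := by ring
      rw [hnum]
      exact div_ne_zero hbQ hb2
    have e1 : f b = ((b : ℚ) + (2 * (t : ℚ) + 2)) / (b : ℚ) := by
      rw [hfdef]; simp only; congr 1; ring
    have e2 : f (b - m) = (((b : ℚ) - (2 * (t : ℚ) + 2)) + (2 * (t : ℚ) + 2)) /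
        ((b : ℚ) - (2 * (t : ℚ) + 2)) := by
      rw [hfdef]; simp only; rw [hcast]; congr 1; ring
    have hfg : f b / f (b - m) = g b := by
      rw [e1, e2, hgdef]
      exact csl_ratio (b : ℚ) (2 * (t : ℚ) + 2) hbQ hb2
    rw [hMset, Finset.prod_insert hbnotin]
    have herase : ∏ a ∈ (A'.filter (fun a => ∀ c ∈ A', a < c → ¬ a ≡ c [ZMOD (2 * t + 2)])).erase (b - m), f a
        = (∏ a ∈ A'.filter (fun a => ∀ c ∈ A', a < c → ¬ a ≡ c [ZMOD (2 * t + 2)]), f a) / f (b - m) := by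
      rw [eq_div_iff hfbm_ne, mul_comm]
      exact Finset.mul_prod_erase _ f hbmM
    have hPprod : ∏ a ∈ A.filter (fun a => 0 < a), g a
        = g b * ∏ a ∈ A'.filter (fun a => 0 < a), g a := by
      rw [hP']
      exact (Finset.mul_prod_erase _ g hbmem).symm
    rw [herase, key, hPprod, ← hfg]
    ring

theorem compact_set_lemma (t : ℕ) (ht : 0 < t) (A : Finset ℤ)
    (h1 : ∀ j : ℤ, 1 ≤ j → j ≤ 2 * t + 1 → -j ∈ A)
    (h2 : ∀ a ∈ A, ¬(-(2 * (t : ℤ) + 1) ≤ a ∧ a ≤ -1) →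
      1 ≤ a ∧ ¬ ((2 * (t : ℤ) + 2) ∣ a))
    (h3 : ∀ a b : ℤ, b ∈ A → 1 ≤ a → a < b → a ≡ b [ZMOD (2 * t + 2)] → a ∈ A) :
    ∏ a ∈ A.filter (fun a => ∀ b ∈ A, a < b → ¬ a ≡ b [ZMOD (2 * t + 2)]),
        (((a : ℚ) + 2 * t + 2) / a) =
      - ∏ a ∈ A.filter (fun a => 0 < a), (1 - ((2 * (t : ℚ) + 2) / a) ^ 2) := by
  exact csl_aux t ht _ A h1 h2 h3 rfl
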